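/- Let 𝕊 and 𝕋 be algebraic theories with free algebra monads S and T. For any two separated terms t[s_x/x] (with x ranging over X = var(t)) and t'[s'_y/y] (with y ranging over Y = var(t')), the following are equivalent: (1) [t[[s_x]_𝕊/x]]_𝕋 = [t'[[s'_y]_𝕊/y]]_𝕋 in TS𝒱; (2) there exist a set Z, functions h : X → Z and h' : Y → Z, and a family of Σ_𝕊-terms (s*_z)_{z ∈ Z} such that t[h] =_𝕋 t'[h'], s_x =_𝕊 s*_{h(x)} for all x ∈ X, and s'_y =_𝕊 s*_{h'(y)} for all y ∈ Y. -/
import Mathlib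


/-! ## Algebraic signatures, terms and equational logic -/

/-- An algebraic signature: a set of operation symbols with arities. -/
structure Sgn where
  ops : Type
  ar : ops → ℕ

/-- Terms over a signature `σ` with variables in `X`. -/
inductive Trm (σ : Sgn) (X : Type) : Type
  | var : X → Trm σ X
  | op : (f : σ.ops) → (Fin (σ.ar f) → Trm σ X) → Trm σ X

/-- Simultaneous substitution. -/
def Trm.bind {σ : Sgn} {X Y : Type} : Trm σ X → (X → Trm σ Y) → Trm σ Y
  | .var x, g => g x
  | .op f k, g => .op f fun i => (k i).bind g

/-- Renaming of variables. -/
def Trm.rename {σ : Sgn} {X Y : Type} (f : X → Y) (t : Trm σ X) : Trm σ Y :=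
  t.bind fun x => .var (f x)

/-- Equations over `σ`: pairs of terms over the fixed countable set `ℕ` of variables. -/
abbrev Eqn (σ : Sgn) := Trm σ ℕ × Trm σ ℕ

/-- Derivability in equational logic from the set of axioms `E`
(axioms, reflexivity, symmetry, transitivity, congruence, substitution). -/
inductive Deriv {σ : Sgn} (E : Set (Eqn σ)) : {X : Type} → Trm σ X → Trm σ X → Prop
  | ax {X : Type} {e : Eqn σ} (he : e ∈ E) (g : ℕ → Trm σ X) :
      Deriv E (e.1.bind g) (e.2.bind g)
  | refl {X : Type} (t : Trm σ X) : Deriv E t t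
  | symm {X : Type} {s t : Trm σ X} : Deriv E s t → Deriv E t s
  | trans {X : Type} {s t u : Trm σ X} : Deriv E s t → Deriv E t u → Deriv E s u
  | congr {X : Type} (f : σ.ops) {k k' : Fin (σ.ar f) → Trm σ X} :
      (∀ i, Deriv E (k i) (k' i)) → Deriv E (.op f k) (.op f k')
  | subst {X Y : Type} {s t : Trm σ X} (g : X → Trm σ Y) :
      Deriv E s t → Deriv E (s.bind g) (t.bind g)

/-- An algebraic theory: a signature together with a set of equations. -/
structure Thy where
  sig : Sgn
  eqns : Set (Eqn sig)

/-! ## The free algebra monad -/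

/-- Carrier of the free algebra monad: terms modulo derivable equality. -/
def FreeM (σ : Sgn) (E : Set (Eqn σ)) (X : Type) : Type :=
  Quot (fun s t : Trm σ X => Deriv E s t)

/-- Equivalence class of a term. -/
def FreeM.mk {σ : Sgn} {E : Set (Eqn σ)} {X : Type} (t : Trm σ X) : FreeM σ E X :=
  Quot.mk _ t

/-- Functorial action of the free algebra monad. -/
noncomputable def FreeM.map {σ : Sgn} {E : Set (Eqn σ)} {X Y : Type}
    (f : X → Y) (q : FreeM σ E X) : FreeM σ E Y :=
  FreeM.mk ((Quot.out q).rename f)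

/-- Unit of the free algebra monad. -/
def FreeM.unit {σ : Sgn} {E : Set (Eqn σ)} {X : Type} (x : X) : FreeM σ E X :=
  FreeM.mk (.var x)

/-- Multiplication of the free algebra monad (flattening). -/
noncomputable def FreeM.mul {σ : Sgn} {E : Set (Eqn σ)} {X : Type}
    (q : FreeM σ E (FreeM σ E X)) : FreeM σ E X :=
  FreeM.mk ((Quot.out q).bind fun c => Quot.out c)

/-! ## Disjoint union of signatures and separated terms -/

/-- Disjoint union of two signatures. -/
def Sgn.sum (σ τ : Sgn) : Sgn := ⟨σ.ops ⊕ τ.ops, Sum.elim σ.ar τ.ar⟩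

/-- Embedding of `σ`-terms into terms over the sum signature. -/
def Trm.inl {σ τ : Sgn} {X : Type} : Trm σ X → Trm (σ.sum τ) X
  | .var x => .var x
  | .op f k => .op (Sum.inl f) fun i => (k i).inl

/-- Embedding of `τ`-terms into terms over the sum signature. -/
def Trm.inr {σ τ : Sgn} {X : Type} : Trm τ X → Trm (σ.sum τ) X
  | .var x => .var x
  | .op f k => .op (Sum.inr f) fun i => (k i).inr

/-- Flattening of a separated term `t[s_x/x]` (`τ`-term over `σ`-terms)
into a term over the sum signature. -/
def sepTS {σ τ : Sgn} {X : Type} (t : Trm τ (Trm σ X)) : Trm (σ.sum τ) X :=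
  (Trm.inr t).bind fun s => Trm.inl s

/-- Flattening of a mixed term `s[t_x/x]` (`σ`-term over `τ`-terms)
into a term over the sum signature. -/
def sepST {σ τ : Sgn} {X : Type} (s : Trm σ (Trm τ X)) : Trm (σ.sum τ) X :=
  (Trm.inl s).bind fun t => Trm.inr t

/-- The element `[t[[s_x]_𝕊/x]]_𝕋` of `TSX` determined by a separated term. -/
def clTS (SS TT : Thy) {X : Type} (t : Trm TT.sig (Trm SS.sig X)) :
    FreeM TT.sig TT.eqns (FreeM SS.sig SS.eqns X) :=
  FreeM.mk (t.rename FreeM.mk)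

/-- The element `[s[[t_x]_𝕋/x]]_𝕊` of `STX` determined by a mixed term. -/
def clST (SS TT : Thy) {X : Type} (s : Trm SS.sig (Trm TT.sig X)) :
    FreeM SS.sig SS.eqns (FreeM TT.sig TT.eqns X) :=
  FreeM.mk (s.rename FreeM.mk)

/-! ## Composite theories -/

/-- A composite theory of `TT` after `SS`: a theory on the disjoint union
of the signatures, containing both sets of equations, in which every term
has a separation, and separations are essentially unique. -/
structure Composite (SS TT : Thy) where
  eqns : Set (Eqn (SS.sig.sum TT.sig))
  containsS : ∀ e ∈ SS.eqns, ((Trm.inl e.1 : Trm (SS.sig.sum TT.sig) ℕ), Trm.inl e.2) ∈ eqns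
  containsT : ∀ e ∈ TT.eqns, ((Trm.inr e.1 : Trm (SS.sig.sum TT.sig) ℕ), Trm.inr e.2) ∈ eqns
  sepExists : ∀ u : Trm (SS.sig.sum TT.sig) ℕ,
      ∃ t : Trm TT.sig (Trm SS.sig ℕ), Deriv eqns u (sepTS t)
  sepUnique : ∀ t t' : Trm TT.sig (Trm SS.sig ℕ),
      Deriv eqns (sepTS t) (sepTS t') → clTS SS TT t = clTS SS TT t'

/-! ## Distributive laws between free algebra monads -/

/-- A distributive law `λ : ST ⇒ TS` between the free algebra monads of `SS` and `TT`. -/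
structure DistLaw (SS TT : Thy) where
  app : ∀ X : Type, FreeM SS.sig SS.eqns (FreeM TT.sig TT.eqns X) →
      FreeM TT.sig TT.eqns (FreeM SS.sig SS.eqns X)
  natural : ∀ (X Y : Type) (f : X → Y)
      (q : FreeM SS.sig SS.eqns (FreeM TT.sig TT.eqns X)),
      app Y (FreeM.map (FreeM.map f) q) = FreeM.map (FreeM.map f) (app X q)
  unitS : ∀ (X : Type) (q : FreeM TT.sig TT.eqns X),
      app X (FreeM.unit q) = FreeM.map FreeM.unit q
  unitT : ∀ (X : Type) (q : FreeM SS.sig SS.eqns X),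
      app X (FreeM.map FreeM.unit q) = FreeM.unit q
  mulS : ∀ (X : Type)
      (q : FreeM SS.sig SS.eqns (FreeM SS.sig SS.eqns (FreeM TT.sig TT.eqns X))),
      app X (FreeM.mul q) =
        FreeM.map FreeM.mul (app (FreeM SS.sig SS.eqns X) (FreeM.map (app X) q))
  mulT : ∀ (X : Type)
      (q : FreeM SS.sig SS.eqns (FreeM TT.sig TT.eqns (FreeM TT.sig TT.eqns X))),
      app X (FreeM.map FreeM.mul q) =
        FreeM.mul (FreeM.map (app X) (app (FreeM TT.sig TT.eqns X) q))

/-! ## Statement 5: equivalent formulations of equality modulo `(𝕊,𝕋)` -/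

/-- For separated terms `t[s_x/x]` (variables of `t` ranging over `A`) and
`t'[s'_y/y]` (variables ranging over `B`), equality of the corresponding
equivalence classes in `TS𝒱` is equivalent to the existence of a set `Z`,
functions `h : A → Z`, `h' : B → Z` and a family of `𝕊`-terms `(s*_z)_{z ∈ Z}`
with `t[h] =_𝕋 t'[h']`, `s_x =_𝕊 s*_{h(x)}` and `s'_y =_𝕊 s*_{h'(y)}`. -/

private lemma deriv_of_eqvGen {σ : Sgn} {E : Set (Eqn σ)} {X : Type} {a b : Trm σ X}
    (h : Relation.EqvGen (fun s t : Trm σ X => Deriv E s t) a b) : Deriv E a b := by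
  induction h with
  | rel _ _ h => exact h
  | refl x => exact Deriv.refl x
  | symm _ _ _ ih => exact ih.symm
  | trans _ _ _ _ _ ih1 ih2 => exact ih1.trans ih2

private lemma freeM_mk_eq_iff {σ : Sgn} {E : Set (Eqn σ)} {X : Type} {a b : Trm σ X} :
    (FreeM.mk a : FreeM σ E X) = FreeM.mk b ↔ Deriv E a b :=
  ⟨fun h => deriv_of_eqvGen (Quot.eqvGen_exact h), fun h => Quot.sound h⟩

private lemma trm_bind_bind {σ : Sgn} {X Y Z : Type} (t : Trm σ X)
    (f : X → Trm σ Y) (g : Y → Trm σ Z) :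
    (t.bind f).bind g = t.bind (fun x => (f x).bind g) := by
  induction t with
  | var x => rfl
  | op f k ih => simp [Trm.bind, ih]

private lemma trm_rename_rename {σ : Sgn} {X Y Z : Type} (t : Trm σ X)
    (f : X → Y) (g : Y → Z) :
    (t.rename f).rename g = t.rename (g ∘ f) := by
  simp [Trm.rename, trm_bind_bind, Trm.bind]

private lemma deriv_rename {σ : Sgn} {E : Set (Eqn σ)} {X Y : Type}
    {a b : Trm σ X} (f : X → Y) (h : Deriv E a b) :
    Deriv E (a.rename f) (b.rename f) :=
  Deriv.subst _ h

theorem equal_modulo_ST_iff (SS TT : Thy) {A B : Type}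
    (t : Trm TT.sig A) (s : A → Trm SS.sig ℕ)
    (t' : Trm TT.sig B) (s' : B → Trm SS.sig ℕ) :
    (FreeM.mk (t.rename fun a => (FreeM.mk (s a) : FreeM SS.sig SS.eqns ℕ)) :
        FreeM TT.sig TT.eqns (FreeM SS.sig SS.eqns ℕ)) =
      FreeM.mk (t'.rename fun b => FreeM.mk (s' b)) ↔
    ∃ (Z : Type) (h : A → Z) (h' : B → Z) (sstar : Z → Trm SS.sig ℕ),
      Deriv TT.eqns (t.rename h) (t'.rename h') ∧
      (∀ a, Deriv SS.eqns (s a) (sstar (h a))) ∧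
      (∀ b, Deriv SS.eqns (s' b) (sstar (h' b))) := by
  constructor
  · intro heq
    refine ⟨FreeM SS.sig SS.eqns ℕ, fun a => FreeM.mk (s a), fun b => FreeM.mk (s' b),
      fun z => Quot.out z, freeM_mk_eq_iff.mp heq, fun a => ?_, fun b => ?_⟩
    · exact freeM_mk_eq_iff.mp (Quot.out_eq (FreeM.mk (s a))).symm
    · exact freeM_mk_eq_iff.mp (Quot.out_eq (FreeM.mk (s' b))).symm
  · rintro ⟨Z, h, h', sstar, hT, hs, hs'⟩
    have e1 : (t.rename fun a => (FreeM.mk (s a) : FreeM SS.sig SS.eqns ℕ)) =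
        (t.rename h).rename (fun z => FreeM.mk (sstar z)) := by
      rw [trm_rename_rename]
      congr 1
      funext a
      exact freeM_mk_eq_iff.mpr (hs a)
    have e2 : (t'.rename fun b => (FreeM.mk (s' b) : FreeM SS.sig SS.eqns ℕ)) =
        (t'.rename h').rename (fun z => FreeM.mk (sstar z)) := by
      rw [trm_rename_rename]
      congr 1
      funext b
      exact freeM_mk_eq_iff.mpr (hs' b)
    rw [e1, e2]
    exact freeM_mk_eq_iff.mpr (deriv_rename _ hT)
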